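/- arXiv:1301.3179 — 4 statements merged into one kernel-verified Lean document; each statement's English description precedes it below -/
import Mathlib

section
/- Let T be an ergodic, measure-preserving transformation of a probability space (X, m), let S = {0, 1} be a two-state space, and let f_0, f_1 : X → S be measurable transition functions such that m({x ∈ X : f_i(x) = i}) < 1 for each i ∈ S. Then the deterministic walk is transitive on S, i.e. for all i, j ∈ S, m({x ∈ X : U_{i,n}(x) = j for some n ≥ 1}) = 1. -/
open MeasureTheory Set Filter

/-- The skew product `T_f (x, i) = (T x, f_i x)` driving a deterministic walk. -/
def detSkew {X S : Type*} (T : X → X) (f : S → X → S) : X × S → X × S :=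
  fun p => (T p.1, f p.2 p.1)

/-- The deterministic walk `U_{i,n}(x) = π₂ (T_f^n (x, i))`. -/
def detWalk {X S : Type*} (T : X → X) (f : S → X → S) (i : S) (n : ℕ) (x : X) : S :=
  ((detSkew T f)^[n] (x, i)).2

/-- The deterministic walk is transitive on `S` if for all `i j`, a.e. point
visits `j` at some positive time when started from `i`. -/
def WalkTransitive {X S : Type*} [MeasurableSpace X] (m : Measure X)
    (T : X → X) (f : S → X → S) : Prop :=
  ∀ i j : S, m {x | ∃ n, 1 ≤ n ∧ detWalk T f i n x = j} = 1

/-- A (non-singular) Markov transformation with Markov partition `P`. -/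
structure IsMarkovMap {Y : Type*} [MeasurableSpace Y] (μ : Measure Y) (R : Y → Y)
    (P : Set (Set Y)) : Prop where
  nonsingular : ∀ A : Set Y, MeasurableSet A → μ A = 0 → μ (R ⁻¹' A) = 0
  measurableSet : ∀ a ∈ P, MeasurableSet a
  pairwiseDisjoint : P.PairwiseDisjoint id
  sUnion_eq : ⋃₀ P = Set.univ
  image_sUnion : ∀ a ∈ P, ∃ Q ⊆ P, R '' a = ⋃₀ Q
  injOn : ∀ a ∈ P, Set.InjOn R a

/-- `a` communicates with `b`: a positive measure set of points of `a` visits `b`. -/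
def Communicates {Y : Type*} [MeasurableSpace Y] (μ : Measure Y) (R : Y → Y)
    (a b : Set Y) : Prop :=
  0 < μ {x | x ∈ a ∧ ∃ n, 1 ≤ n ∧ R^[n] x ∈ b}

/-- The communication class of `a` in the partition `P`. -/
def commClass {Y : Type*} [MeasurableSpace Y] (μ : Measure Y) (R : Y → Y)
    (P : Set (Set Y)) (a : Set Y) : Set (Set Y) :=
  {b ∈ P | Communicates μ R a b ∧ Communicates μ R b a}

/-- `C` is a communication class of the partition `P`. -/
def IsCommClass {Y : Type*} [MeasurableSpace Y] (μ : Measure Y) (R : Y → Y)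
    (P : Set (Set Y)) (C : Set (Set Y)) : Prop :=
  ∃ a ∈ P, C = commClass μ R P a

/-- `C` is a closed communication class of the partition `P`. -/
def IsClosedCommClass {Y : Type*} [MeasurableSpace Y] (μ : Measure Y) (R : Y → Y)
    (P : Set (Set Y)) (C : Set (Set Y)) : Prop :=
  IsCommClass μ R P C ∧ ∀ a ∈ C, ∀ b ∈ P, Communicates μ R a b → Communicates μ R b a

/-- The product partition `β̃ = β × S`. -/
def prodPartition {X : Type*} (S : Type*) (β : Set (Set X)) : Set (Set (X × S)) :=
  {c | ∃ a ∈ β, ∃ i : S, c = a ×ˢ ({i} : Set S)}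

/-- The measure `μ = (m / #S) × counting measure` on `X × S`. -/
noncomputable def fiberMeasure {X : Type*} (S : Type*) [MeasurableSpace X]
    [MeasurableSpace S] [Fintype S] (m : Measure X) : Measure (X × S) :=
  (Fintype.card S : ENNReal)⁻¹ • m.prod Measure.count

/-- The `n`-cylinder `[w 0, …, w (n-1)] = ⋂ j, R^{-j} (w j)`. -/
def cylinder {Y : Type*} (R : Y → Y) {n : ℕ} (w : Fin n → Set Y) : Set Y :=
  ⋂ j : Fin n, (R^[(j : ℕ)]) ⁻¹' w j

/-- The Strong Distortion Property: the Radon–Nikodym derivatives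
`v'_a = d(μ ∘ R^{-n})/dμ` on images of cylinders have a.e. bounded ratio. -/
def StrongDistortion {Y : Type*} [MeasurableSpace Y] (μ : Measure Y) (R : Y → Y)
    (P : Set (Set Y)) : Prop :=
  ∃ D : ENNReal, 1 ≤ D ∧ D ≠ ⊤ ∧
    ∀ n : ℕ, 1 ≤ n → ∀ w : Fin n → Set Y, (∀ j, w j ∈ P) →
      ∀ v : Y → ENNReal, Measurable v →
        (∀ B : Set Y, MeasurableSet B →
          ∫⁻ x in (R^[n] '' cylinder R w) ∩ B, v x ∂μ = μ (cylinder R w ∩ R^[n] ⁻¹' B)) →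
        ∀ᵐ x ∂μ.restrict (R^[n] '' cylinder R w),
          ∀ᵐ y ∂μ.restrict (R^[n] '' cylinder R w), v x / v y ≤ D

/-- The Finite Images property for a Markov map. -/
def FiniteImages {Y : Type*} (R : Y → Y) (P : Set (Set Y)) : Prop :=
  {s : Set Y | ∃ a ∈ P, s = R '' a}.Finite

/-- The partition `P` is irreducible under `R`: all elements intercommunicate. -/
def IrreduciblePartition {Y : Type*} [MeasurableSpace Y] (μ : Measure Y) (R : Y → Y)
    (P : Set (Set Y)) : Prop :=
  ∀ a ∈ P, ∀ b ∈ P, Communicates μ R a b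


lemma detSkew_fst {X S : Type*} (T : X → X) (f : S → X → S) (n : ℕ) (x : X) (i : S) :
    ((detSkew T f)^[n] (x, i)).1 = T^[n] x := by
  induction n with
  | zero => rfl
  | succ n ih =>
      rw [Function.iterate_succ_apply', Function.iterate_succ_apply']
      simp [detSkew, ih]

lemma detWalk_succ {X S : Type*} (T : X → X) (f : S → X → S) (i : S) (n : ℕ) (x : X) :
    detWalk T f i (n + 1) x = f (detWalk T f i n x) (T^[n] x) := by
  unfold detWalk
  rw [Function.iterate_succ_apply']
  simp [detSkew, detSkew_fst]

lemma walk_visits {X : Type*} (T : X → X) (f : Fin 2 → X → Fin 2) (x : X)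
    (H : ∀ k : Fin 2, ∀ N : ℕ, ∃ n, N ≤ n ∧ f k (T^[n] x) ≠ k) (i j : Fin 2) :
    ∃ n, 1 ≤ n ∧ detWalk T f i n x = j := by
  have fin2 : ∀ a k j : Fin 2, a ≠ k → k ≠ j → a = j := by decide
  have key : ∀ k : Fin 2, k ≠ j → ∀ n, 1 ≤ n → detWalk T f i n x = k →
      ∃ m, 1 ≤ m ∧ detWalk T f i m x = j := by
    intro k hkj n hn hsn
    obtain ⟨M, hnM, hM⟩ := H k n
    have aux : ∀ d : ℕ, detWalk T f i (n + d) x = k ∨ ∃ m, 1 ≤ m ∧ detWalk T f i m x = j := by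
      intro d
      induction d with
      | zero => left; simpa using hsn
      | succ d ih =>
          rcases ih with h | h
          · by_cases hc : f k (T^[n + d] x) = k
            · left; rw [show n + (d+1) = (n+d) + 1 by ring, detWalk_succ, h, hc]
            · right
              refine ⟨n + d + 1, by omega, ?_⟩
              rw [detWalk_succ, h]
              exact fin2 _ _ _ hc hkj
          · right; exact h
    rcases aux (M - n) with h | h
    · have hMn : n + (M - n) = M := by omega
      rw [hMn] at h
      refine ⟨M + 1, by omega, ?_⟩
      rw [detWalk_succ, h]
      exact fin2 _ _ _ hM hkj
    · exact h
  by_cases h1 : detWalk T f i 1 x = j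
  · exact ⟨1, le_refl 1, h1⟩
  · exact key (detWalk T f i 1 x) h1 1 (le_refl 1) rfl

open Topology in
lemma ergodic_freq {X : Type*} [MeasurableSpace X] (m : Measure X) [IsProbabilityMeasure m]
    (T : X → X) (hT : MeasurePreserving T m m) (hTerg : Ergodic T m)
    (A : Set X) (hA : MeasurableSet A) (hApos : 0 < m A) :
    ∀ᵐ x ∂m, ∀ N : ℕ, ∃ n, N ≤ n ∧ T^[n] x ∈ A := by
  set D : ℕ → Set X := fun N => ⋃ n, ⋃ _ : N ≤ n, T^[n] ⁻¹' A with hD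
  set C : Set X := ⋂ N, D N with hC
  have hDmeas : ∀ N, MeasurableSet (D N) := fun N =>
    MeasurableSet.iUnion fun n => MeasurableSet.iUnion fun _ => (hT.measurable.iterate n) hA
  have hCmeas : MeasurableSet C := MeasurableSet.iInter hDmeas
  have hmem : ∀ x, x ∈ C ↔ ∀ N : ℕ, ∃ n, N ≤ n ∧ T^[n] x ∈ A := by
    intro x; simp [hC, hD, mem_iInter, mem_iUnion]
  have hinv : T ⁻¹' C = C := by
    ext x
    simp only [mem_preimage, hmem]
    constructor
    · intro h N
      obtain ⟨n, hn, hx⟩ := h N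
      exact ⟨n + 1, by omega, by rwa [Function.iterate_succ_apply]⟩
    · intro h N
      obtain ⟨n, hn, hx⟩ := h (N + 1)
      refine ⟨n - 1, by omega, ?_⟩
      have : T^[n - 1] (T x) = T^[n] x := by
        rw [← Function.iterate_succ_apply]; congr 1; omega
      rwa [this]
  rcases hTerg.ae_empty_or_univ hCmeas hinv with h0 | h1
  · exfalso
    have hC0 : m C = 0 := by
      have := measure_congr h0; simpa using this
    have hanti : Antitone D := by
      intro a b hab
      refine iUnion_mono fun n => iUnion_subset fun h => ?_
      exact subset_iUnion_of_subset (le_trans hab h) (by simp)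
    have htend : Tendsto (m ∘ D) atTop (𝓝 (m C)) :=
      tendsto_measure_iInter_atTop (fun N => (hDmeas N).nullMeasurableSet) hanti
        ⟨0, measure_ne_top m _⟩
    have hge : ∀ N, m A ≤ m (D N) := by
      intro N
      have : T^[N] ⁻¹' A ⊆ D N := subset_iUnion_of_subset N (by simp)
      calc m A = m (T^[N] ⁻¹' A) := ((hT.iterate N).measure_preimage hA.nullMeasurableSet).symm
        _ ≤ m (D N) := measure_mono this
    have : m A ≤ m C := ge_of_tendsto htend (Eventually.of_forall hge)
    rw [hC0] at this
    exact absurd (le_antisymm this zero_le) (ne_of_gt hApos)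
  · have := measure_congr h1
    have hC1 : m C = 1 := by simpa using this
    have : ∀ᵐ x ∂m, x ∈ C := by
      rw [ae_iff]
      have : {x | ¬ x ∈ C} = Cᶜ := rfl
      rw [this, measure_compl hCmeas (measure_ne_top m _), hC1]
      simp
    filter_upwards [this] with x hx
    exact (hmem x).mp hx


/-- A deterministic walk on a two-state space, driven by an ergodic
measure-preserving transformation, with `m {f_i = i} < 1` for each state, is transitive. -/
theorem stmt_0 {X : Type*} [MeasurableSpace X] (m : Measure X) [IsProbabilityMeasure m]
    (T : X → X) (hT : MeasurePreserving T m m) (hTerg : Ergodic T m)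
    (f : Fin 2 → X → Fin 2) (hf : ∀ i, Measurable (f i))
    (hfix : ∀ i : Fin 2, m {x | f i x = i} < 1) :
    WalkTransitive m T f := by
  have hAmeas : ∀ k : Fin 2, MeasurableSet {x | f k x ≠ k} := by
    intro k
    have : {x | f k x ≠ k} = (f k ⁻¹' {k})ᶜ := by
      ext x; simp
    rw [this]
    exact ((hf k) (measurableSet_singleton k)).compl
  have hApos : ∀ k : Fin 2, 0 < m {x | f k x ≠ k} := by
    intro k
    have hcompl : {x | f k x ≠ k} = {x | f k x = k}ᶜ := by
      ext x; simp
    have hmeas : MeasurableSet {x | f k x = k} := by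
      have : {x | f k x = k} = f k ⁻¹' {k} := by ext x; simp
      rw [this]; exact (hf k) (measurableSet_singleton k)
    rw [hcompl, measure_compl hmeas (measure_ne_top m _), measure_univ]
    exact tsub_pos_of_lt (hfix k)
  have h0 := ergodic_freq m T hT hTerg _ (hAmeas 0) (hApos 0)
  have h1 := ergodic_freq m T hT hTerg _ (hAmeas 1) (hApos 1)
  intro i j
  have hae : ∀ᵐ x ∂m, ∃ n, 1 ≤ n ∧ detWalk T f i n x = j := by
    filter_upwards [h0, h1] with x hx0 hx1
    refine walk_visits T f x ?_ i j
    intro k N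
    fin_cases k
    · exact hx0 N
    · exact hx1 N
  set Sset : Set X := {x | ∃ n, 1 ≤ n ∧ detWalk T f i n x = j} with hS
  have hcompl0 : m Ssetᶜ = 0 := by
    rw [ae_iff] at hae
    exact hae
  refine le_antisymm prob_le_one ?_
  calc (1 : ENNReal) = m Set.univ := (measure_univ).symm
    _ = m (Sset ∪ Ssetᶜ) := by rw [Set.union_compl_self]
    _ ≤ m Sset + m Ssetᶜ := measure_union_le _ _
    _ = m Sset := by rw [hcompl0, add_zero]
end

section
/- Let T be a Markov transformation of a probability space (X, m) with Markov partition β, let S be a finite state space, and suppose each transition function f_i : X → S is constant on each element of β. If T has the Strong Distortion Property with respect to m, then the skew product T_f has the Strong Distortion Property with respect to the measure μ (with respect to the Markov partition β̃ := β × S). -/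
open MeasureTheory Set Filter

lemma detSkew_iterate_fst {X S : Type*} (T : X → X) (f : S → X → S) (p : X × S) (k : ℕ) :
    ((detSkew T f)^[k] p).1 = T^[k] p.1 := by
  induction k with
  | zero => rfl
  | succ k ih =>
    rw [Function.iterate_succ_apply', Function.iterate_succ_apply', ← ih]
    rfl

lemma fiber_restrict_prod_singleton {X S : Type*} [MeasurableSpace X] [MeasurableSpace S]
    [MeasurableSingletonClass S] [Fintype S] (m : Measure X) [SFinite m]
    (G : Set X) (t : S) :
    (m.prod Measure.count).restrict (G ×ˢ ({t} : Set S)) =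
      (m.restrict G).map (fun x => (x, t)) := by
  ext A hA
  rw [Measure.restrict_apply hA, Measure.map_apply measurable_prodMk_right hA,
    Measure.restrict_apply (measurable_prodMk_right hA)]
  have hset : A ∩ G ×ˢ ({t} : Set S) =
      (((fun x : X => (x, t)) ⁻¹' A) ∩ G) ×ˢ ({t} : Set S) := by
    ext ⟨x, s⟩
    simp only [Set.mem_inter_iff, Set.mem_prod, Set.mem_singleton_iff, Set.mem_preimage]
    constructor
    · rintro ⟨hxA, hxG, rfl⟩; exact ⟨⟨hxA, hxG⟩, rfl⟩
    · rintro ⟨⟨hxA, hxG⟩, rfl⟩; exact ⟨hxA, hxG, rfl⟩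
  rw [hset, Measure.prod_prod, Measure.count_singleton, mul_one]

/-- If the base Markov map `T` has the Strong Distortion Property, then
the skew product `T_f` has the Strong Distortion Property with respect to `μ`. -/
theorem stmt_7 {X S : Type*} [MeasurableSpace X] [MeasurableSpace S]
    [MeasurableSingletonClass S] [Fintype S]
    (m : Measure X) [IsProbabilityMeasure m]
    (T : X → X) (β : Set (Set X)) (hMarkov : IsMarkovMap m T β)
    (f : S → X → S)
    (hconst : ∀ i : S, ∀ a ∈ β, ∀ x ∈ a, ∀ y ∈ a, f i x = f i y)
    (hSD : StrongDistortion m T β) :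
    StrongDistortion (fiberMeasure S m) (detSkew T f) (prodPartition S β) := by
  obtain ⟨D, hD1, hDtop, hmain⟩ := hSD
  refine ⟨D, hD1, hDtop, ?_⟩
  intro n hn w hw v hvmeas hv
  set g := detSkew T f with hg
  by_cases hcyl : cylinder g w = ∅
  · simp only [hcyl, Set.image_empty, Measure.restrict_empty]
    simp [ae_iff]
  obtain ⟨p0, hp0⟩ := Set.nonempty_iff_ne_empty.2 hcyl
  choose a ha i hwi using hw
  haveI : Nonempty S := ⟨p0.2⟩
  set c : ENNReal := (Fintype.card S : ENNReal)⁻¹ with hcdef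
  have hc0 : c ≠ 0 := by
    simp [hcdef]
  have hctop : c ≠ ⊤ := by
    simp [hcdef, Fintype.card_ne_zero]
  set C : Set X := cylinder T a with hC
  set t : S := (g^[n] p0).2 with htdef
  have hfst : ∀ (p : X × S) (k : ℕ), (g^[k] p).1 = T^[k] p.1 :=
    fun p k => detSkew_iterate_fst T f p k
  have hp0' : ∀ j : Fin n, g^[(j : ℕ)] p0 ∈ (a j) ×ˢ ({i j} : Set S) := by
    intro j
    have h1 : g^[(j : ℕ)] p0 ∈ w j := Set.mem_iInter.1 hp0 j
    rwa [hwi j] at h1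
  have hp0C : p0.1 ∈ C := by
    rw [hC]
    refine Set.mem_iInter.2 fun j => ?_
    have := (hp0' j).1
    rwa [hfst] at this
  -- the walk on the base cylinder is deterministic
  have hL1 : ∀ x ∈ C, ∀ k, k ≤ n → g^[k] (x, p0.2) = (T^[k] x, (g^[k] p0).2) := by
    intro x hx k
    induction k with
    | zero => intro _; simp
    | succ k ih =>
      intro hk1
      have hk : k < n := hk1
      rw [Function.iterate_succ_apply' g, Function.iterate_succ_apply' g, ih hk.le,
        Function.iterate_succ_apply' T]
      have h1 : T^[k] x ∈ a ⟨k, hk⟩ := Set.mem_iInter.1 hx ⟨k, hk⟩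
      have h2 : T^[k] p0.1 ∈ a ⟨k, hk⟩ := by
        have := (hp0' ⟨k, hk⟩).1
        rwa [hfst] at this
      have hf : f ((g^[k] p0).2) (T^[k] x) = f ((g^[k] p0).2) ((g^[k] p0).1) := by
        rw [hfst]
        exact hconst _ _ (ha ⟨k, hk⟩) _ h1 _ h2
      show (T (T^[k] x), f ((g^[k] p0).2) (T^[k] x)) =
        (T (T^[k] x), f ((g^[k] p0).2) ((g^[k] p0).1))
      rw [hf]
  have hcylEq : cylinder g w = C ×ˢ ({p0.2} : Set S) := by
    ext ⟨x, s⟩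
    constructor
    · intro h
      have hj : ∀ j : Fin n, g^[(j : ℕ)] (x, s) ∈ w j := fun j => Set.mem_iInter.1 h j
      have hxC : x ∈ C := by
        rw [hC]
        refine Set.mem_iInter.2 fun j => ?_
        have h1 := hj j
        rw [hwi j] at h1
        have h2 := h1.1
        rwa [hfst] at h2
      have h0 := hj ⟨0, hn⟩
      rw [hwi ⟨0, hn⟩] at h0
      have hs : s = i ⟨0, hn⟩ := h0.2
      have hp02 : p0.2 = i ⟨0, hn⟩ := (hp0' ⟨0, hn⟩).2
      exact ⟨hxC, by rw [Set.mem_singleton_iff, hs, hp02]⟩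
    · rintro ⟨hxC, hs⟩
      have hs' : s = p0.2 := hs
      subst hs'
      refine Set.mem_iInter.2 fun j => ?_
      rw [Set.mem_preimage, hwi j, hL1 x hxC j j.2.le]
      exact ⟨Set.mem_iInter.1 hxC j, (hp0' j).2⟩
  have himg : g^[n] '' cylinder g w = (T^[n] '' C) ×ˢ ({t} : Set S) := by
    rw [hcylEq]
    ext ⟨y, s⟩
    constructor
    · rintro ⟨⟨x, s'⟩, ⟨hxC, hs'⟩, hxy⟩
      have hs'' : s' = p0.2 := hs'
      subst hs''
      rw [hL1 x hxC n le_rfl] at hxy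
      obtain ⟨h1, h2⟩ := Prod.mk.inj hxy
      exact ⟨⟨x, hxC, h1⟩, by rw [Set.mem_singleton_iff, ← h2]⟩
    · rintro ⟨⟨x, hxC, rfl⟩, hs⟩
      have hs' : s = t := hs
      exact ⟨(x, p0.2), ⟨hxC, rfl⟩, by rw [hL1 x hxC n le_rfl, hs']⟩
  -- the lifted Radon–Nikodym identity
  have hμ : fiberMeasure S m = c • (m.prod Measure.count) := rfl
  have uid : ∀ B : Set X, MeasurableSet B →
      ∫⁻ x in (T^[n] '' cylinder T a) ∩ B, v (x, t) ∂m =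
        m (cylinder T a ∩ T^[n] ⁻¹' B) := by
    intro B hB
    have key := hv (B ×ˢ ({t} : Set S)) (hB.prod (measurableSet_singleton t))
    have e1 : g^[n] '' cylinder g w ∩ B ×ˢ ({t} : Set S) =
        ((T^[n] '' C) ∩ B) ×ˢ ({t} : Set S) := by
      rw [himg, Set.prod_inter_prod, Set.inter_self]
    have e2 : cylinder g w ∩ g^[n] ⁻¹' (B ×ˢ ({t} : Set S)) =
        (C ∩ T^[n] ⁻¹' B) ×ˢ ({p0.2} : Set S) := by
      rw [hcylEq]
      ext ⟨x, s⟩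
      simp only [Set.mem_inter_iff, Set.mem_prod, Set.mem_singleton_iff, Set.mem_preimage]
      constructor
      · rintro ⟨⟨hxC, rfl⟩, hpre⟩
        rw [hL1 x hxC n le_rfl] at hpre
        exact ⟨⟨hxC, hpre.1⟩, rfl⟩
      · rintro ⟨⟨hxC, hxB⟩, rfl⟩
        refine ⟨⟨hxC, rfl⟩, ?_⟩
        rw [hL1 x hxC n le_rfl]
        exact ⟨hxB, rfl⟩
    rw [e1, e2, hμ] at key
    rw [Measure.smul_apply, smul_eq_mul, Measure.prod_prod, Measure.count_singleton,
      mul_one] at key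
    rw [Measure.restrict_smul, lintegral_smul_measure,
      fiber_restrict_prod_singleton m _ t,
      lintegral_map hvmeas measurable_prodMk_right] at key
    have := (ENNReal.mul_right_inj hc0 hctop).1 key
    rwa [hC] at this
  have umeas : Measurable (fun x : X => v (x, t)) :=
    hvmeas.comp measurable_prodMk_right
  have hbase := hmain n hn a ha (fun x => v (x, t)) umeas uid
  set E : Set X := T^[n] '' cylinder T a with hE
  have hEC : E = T^[n] '' C := by rw [hE, hC]
  have hEfin : m E ≠ ⊤ := (measure_lt_top m E).ne
  -- Step A: inner a.e. transfer
  have stepA : ∀ y : X, (∀ᵐ z ∂m.restrict E, v (y, t) / v (z, t) ≤ D) →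
      ∀ᵐ q ∂(fiberMeasure S m).restrict (g^[n] '' cylinder g w), v (y, t) / v q ≤ D := by
    intro y hy
    rw [ae_iff] at hy ⊢
    have hBz : MeasurableSet {z : X | ¬ v (y, t) / v (z, t) ≤ D} := by
      simp only [not_le]
      exact measurableSet_lt measurable_const (measurable_const.div umeas)
    have hBq : MeasurableSet {q : X × S | ¬ v (y, t) / v q ≤ D} := by
      simp only [not_le]
      exact measurableSet_lt measurable_const (measurable_const.div hvmeas)
    rw [Measure.restrict_apply hBz] at hy
    rw [Measure.restrict_apply hBq]
    set M := toMeasurable m ({z : X | ¬ v (y, t) / v (z, t) ≤ D} ∩ E) with hM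
    have hM0 : m M = 0 := by rw [hM, measure_toMeasurable]; exact hy
    have hsub : {q : X × S | ¬ v (y, t) / v q ≤ D} ∩ (g^[n] '' cylinder g w) ⊆
        M ×ˢ ({t} : Set S) := by
      rw [himg]
      rintro ⟨z, s⟩ ⟨hq, hz, hs⟩
      rw [Set.mem_singleton_iff] at hs
      subst hs
      exact ⟨subset_toMeasurable m _ ⟨hq, hEC ▸ hz⟩, rfl⟩
    refine le_antisymm ?_ zero_le
    calc fiberMeasure S m ({q : X × S | ¬ v (y, t) / v q ≤ D} ∩ g^[n] '' cylinder g w)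
        ≤ fiberMeasure S m (M ×ˢ ({t} : Set S)) := measure_mono hsub
      _ = c * (m M * Measure.count {t}) := by
          rw [hμ, Measure.smul_apply, smul_eq_mul, Measure.prod_prod]
      _ = 0 := by rw [hM0, zero_mul, mul_zero]
  -- Step B: outer a.e. transfer
  rw [ae_iff]
  set K := {p : X × S |
    ¬ ∀ᵐ q ∂(fiberMeasure S m).restrict (g^[n] '' cylinder g w), v p / v q ≤ D} with hK
  set Em := toMeasurable m E with hEm
  have hEmMeas : MeasurableSet Em := measurableSet_toMeasurable m E
  set W := Em ×ˢ ({t} : Set S) with hW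
  have hWmeas : MeasurableSet W := hEmMeas.prod (measurableSet_singleton t)
  have hKx : m.restrict E {y : X | ¬ ∀ᵐ z ∂m.restrict E, v (y, t) / v (z, t) ≤ D} = 0 :=
    ae_iff.1 hbase
  set N := toMeasurable (m.restrict E)
    {y : X | ¬ ∀ᵐ z ∂m.restrict E, v (y, t) / v (z, t) ≤ D} with hN
  have hNmeas : MeasurableSet N := measurableSet_toMeasurable _ _
  have hN0 : m.restrict E N = 0 := by rw [hN, measure_toMeasurable]; exact hKx
  have hle : (fiberMeasure S m).restrict (g^[n] '' cylinder g w) K ≤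
      (fiberMeasure S m).restrict W K := by
    refine Measure.le_iff'.1 (Measure.restrict_mono ?_ le_rfl) K
    rw [himg, hW]
    exact Set.prod_mono_left (hEC ▸ subset_toMeasurable m E)
  have hsubK : K ⊆ (N ×ˢ ({t} : Set S)) ∪ Wᶜ := by
    intro p hp
    by_cases hpW : p ∈ W
    · left
      obtain ⟨hp1, hp2⟩ := hpW
      rw [Set.mem_singleton_iff] at hp2
      refine ⟨?_, hp2⟩
      by_contra hpN
      have hpy : ∀ᵐ z ∂m.restrict E, v (p.1, t) / v (z, t) ≤ D := by
        by_contra h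
        exact hpN (subset_toMeasurable _ _ h)
      have h2 := stepA p.1 hpy
      have hpe : p = (p.1, t) := Prod.ext rfl hp2
      rw [← hpe] at h2
      exact hp h2
    · right; exact hpW
  have hWN : (fiberMeasure S m).restrict W (N ×ˢ ({t} : Set S)) = 0 := by
    rw [Measure.restrict_apply (hNmeas.prod (measurableSet_singleton t)), hW,
      Set.prod_inter_prod, Set.inter_self]
    have hmNE : m (N ∩ Em) = 0 := by
      rw [Set.inter_comm, hEm, Measure.measure_toMeasurable_inter hNmeas hEfin, Set.inter_comm,
        ← Measure.restrict_apply hNmeas]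
      exact hN0
    rw [hμ, Measure.smul_apply, smul_eq_mul, Measure.prod_prod, hmNE, zero_mul, mul_zero]
  have hWc : (fiberMeasure S m).restrict W Wᶜ = 0 := by
    rw [Measure.restrict_apply hWmeas.compl, Set.compl_inter_self, measure_empty]
  refine le_antisymm ?_ zero_le
  calc (fiberMeasure S m).restrict (g^[n] '' cylinder g w) K
      ≤ (fiberMeasure S m).restrict W K := hle
    _ ≤ (fiberMeasure S m).restrict W ((N ×ˢ ({t} : Set S)) ∪ Wᶜ) := measure_mono hsubK
    _ ≤ (fiberMeasure S m).restrict W (N ×ˢ ({t} : Set S)) +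
        (fiberMeasure S m).restrict W Wᶜ := measure_union_le _ _
    _ = 0 := by rw [hWN, hWc, add_zero]
end

section
/- Consider the deterministic walk on S = {0, 1, 2} driven by the doubling map T : [0,1] → [0,1], Tx := 2x mod 1 (with Lebesgue measure), with transition functions f_0(x) = 0 for x ∈ [3/4, 1), 1 for x ∈ [1/4, 3/4), 2 for x ∈ [0, 1/4); f_1(x) = 0 for x ∈ [1/4, 1/2), 1 for x ∈ [0, 1/4) ∪ [3/4, 1], 2 for x ∈ [1/2, 3/4); f_2(x) = 0 for x ∈ [0, 1/4) ∪ [1/2, 3/4), 2 for x ∈ [1/4, 1/2) ∪ [3/4, 1]. Then for every x ∈ [0, 1/2) and every n ≥ 0, U_{1,n}(x) ≠ 2; in particular the deterministic walk is not transitive on S. -/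
open MeasureTheory Set Filter

/-- The doubling map `T x = 2 x mod 1` on `[0, 1]`. -/
noncomputable def doubling : ℝ → ℝ := fun x => Int.fract (2 * x)

open scoped Classical in
/-- The environment `f_0, f_1, f_2` of the counter-example. -/
noncomputable def exEnv : Fin 3 → ℝ → Fin 3 := fun i x =>
  if i = 0 then
    (if 3/4 ≤ x ∧ x < 1 then 0
     else if 1/4 ≤ x ∧ x < 3/4 then 1
     else 2)
  else if i = 1 then
    (if 1/4 ≤ x ∧ x < 1/2 then 0
     else if (0 ≤ x ∧ x < 1/4) ∨ (3/4 ≤ x ∧ x ≤ 1) then 1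
     else 2)
  else
    (if (0 ≤ x ∧ x < 1/4) ∨ (1/2 ≤ x ∧ x < 3/4) then 0
     else 2)

lemma doubling_lo {x : ℝ} (h0 : (0:ℝ) ≤ x) (h1 : x < 1/2) : doubling x = 2*x := by
  unfold doubling
  rw [Int.fract_eq_self]
  constructor <;> nlinarith

lemma doubling_hi {x : ℝ} (h0 : (1/2:ℝ) ≤ x) (h1 : x < 1) : doubling x = 2*x - 1 := by
  unfold doubling
  calc Int.fract (2*x) = Int.fract (2*x - 1 + (1:ℤ)) := by norm_num
    _ = Int.fract (2*x - 1) := Int.fract_add_intCast _ _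
    _ = 2*x - 1 := Int.fract_eq_self.2 ⟨by linarith, by linarith⟩

lemma exEnv1_lo {x : ℝ} (h0 : (0:ℝ) ≤ x) (h1 : x < 1/4) : exEnv 1 x = 1 := by
  simp only [exEnv]
  rw [if_neg (show ¬(1:Fin 3) = 0 by decide), if_pos trivial,
    if_neg (show ¬(1/4 ≤ x ∧ x < 1/2) by push_neg; intro h; linarith),
    if_pos (Or.inl ⟨h0, h1⟩)]

lemma exEnv1_hi {x : ℝ} (h0 : (1/4:ℝ) ≤ x) (h1 : x < 1/2) : exEnv 1 x = 0 := by
  simp only [exEnv]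
  rw [if_neg (show ¬(1:Fin 3) = 0 by decide), if_pos trivial, if_pos ⟨h0, h1⟩]

lemma exEnv0_lo {x : ℝ} (h0 : (1/2:ℝ) ≤ x) (h1 : x < 3/4) : exEnv 0 x = 1 := by
  simp only [exEnv]
  rw [if_pos trivial,
    if_neg (show ¬(3/4 ≤ x ∧ x < 1) by push_neg; intro h; linarith),
    if_pos ⟨by linarith, h1⟩]

lemma exEnv0_hi {x : ℝ} (h0 : (3/4:ℝ) ≤ x) (h1 : x < 1) : exEnv 0 x = 0 := by
  simp only [exEnv]
  rw [if_pos trivial, if_pos ⟨h0, h1⟩]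

def walkInv (p : ℝ × Fin 3) : Prop :=
  (p.2 = 1 ∧ p.1 ∈ Set.Ico (0:ℝ) (1/2)) ∨ (p.2 = 0 ∧ p.1 ∈ Set.Ico (1/2:ℝ) 1)

lemma walkInv_step {p : ℝ × Fin 3} (h : walkInv p) : walkInv (detSkew doubling exEnv p) := by
  obtain ⟨x, i⟩ := p
  rcases h with ⟨hi, hx0, hx1⟩ | ⟨hi, hx0, hx1⟩ <;> simp only at hi hx0 hx1 <;> subst hi <;>
    simp only [detSkew, walkInv]
  · rcases lt_or_ge x (1/4) with hq | hq
    · left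
      rw [exEnv1_lo hx0 hq, doubling_lo hx0 hx1]
      exact ⟨rfl, by constructor <;> linarith⟩
    · right
      rw [exEnv1_hi hq hx1, doubling_lo hx0 hx1]
      exact ⟨rfl, by constructor <;> linarith⟩
  · rcases lt_or_ge x (3/4) with hq | hq
    · left
      rw [exEnv0_lo hx0 hq, doubling_hi hx0 hx1]
      exact ⟨rfl, by constructor <;> linarith⟩
    · right
      rw [exEnv0_hi hq hx1, doubling_hi hx0 hx1]
      exact ⟨rfl, by constructor <;> linarith⟩

lemma walkInv_iter {x : ℝ} (hx : x ∈ Set.Ico (0:ℝ) (1/2)) (n : ℕ) :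
    walkInv ((detSkew doubling exEnv)^[n] (x, 1)) := by
  induction n with
  | zero => exact Or.inl ⟨rfl, hx⟩
  | succ n ih =>
    rw [Function.iterate_succ_apply']
    exact walkInv_step ih

lemma never_two : ∀ x ∈ Set.Ico (0 : ℝ) (1/2), ∀ n : ℕ,
    detWalk doubling exEnv 1 n x ≠ 2 := by
  intro x hx n
  rcases walkInv_iter hx n with ⟨h, -⟩ | ⟨h, -⟩ <;>
    simp only [detWalk, h] <;> decide


/-- For the walk driven by the doubling map in the environment `exEnv`,
started at state `1` from any `x ∈ [0, 1/2)`, state `2` is never visited; in particular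
the walk is not transitive on `{0, 1, 2}`. -/
theorem stmt_11 :
    (∀ x ∈ Set.Ico (0 : ℝ) (1/2), ∀ n : ℕ, detWalk doubling exEnv 1 n x ≠ 2) ∧
      ¬ WalkTransitive (volume.restrict (Set.Icc (0 : ℝ) 1)) doubling exEnv := by
  refine ⟨never_two, ?_⟩
  intro h
  have h12 := h 1 2
  set A := {x : ℝ | ∃ n, 1 ≤ n ∧ detWalk doubling exEnv 1 n x = 2} with hA
  have hsub : A ∩ Set.Icc (0:ℝ) 1 ⊆ Set.Icc (1/2:ℝ) 1 := by
    rintro x ⟨⟨n, -, hn⟩, hx0, hx1⟩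
    refine ⟨?_, hx1⟩
    by_contra hlt
    exact never_two x ⟨hx0, by linarith [not_le.mp hlt]⟩ n hn
  have hle : (volume.restrict (Set.Icc (0:ℝ) 1)) A ≤ volume (Set.Icc (1/2:ℝ) 1) := by
    calc (volume.restrict (Set.Icc (0:ℝ) 1)) A
        ≤ (volume.restrict (Set.Icc (0:ℝ) 1)) (Set.Icc (1/2:ℝ) 1 ∪ (Set.Icc (0:ℝ) 1)ᶜ) := by
          apply measure_mono
          intro x hx
          by_cases hx' : x ∈ Set.Icc (0:ℝ) 1
          · exact Or.inl (hsub ⟨hx, hx'⟩)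
          · exact Or.inr hx'
      _ ≤ (volume.restrict (Set.Icc (0:ℝ) 1)) (Set.Icc (1/2:ℝ) 1)
            + (volume.restrict (Set.Icc (0:ℝ) 1)) (Set.Icc (0:ℝ) 1)ᶜ :=
          measure_union_le _ _
      _ = (volume.restrict (Set.Icc (0:ℝ) 1)) (Set.Icc (1/2:ℝ) 1) := by
          rw [Measure.restrict_apply (measurableSet_Icc.compl),
            Set.compl_inter_self, measure_empty, add_zero]
      _ ≤ volume (Set.Icc (1/2:ℝ) 1) := Measure.restrict_le_self _
  rw [h12, Real.volume_Icc] at hle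
  rw [show (1:ℝ)-1/2 = 1/2 by norm_num] at hle
  have := ENNReal.one_le_ofReal.mp hle
  linarith
end

section
/- Let T be an ergodic, measure-preserving transformation of a probability space (X, m), let S be a finite state space with measurable transition functions f_i : X → S, and suppose there exists a measurable set A ⊆ X with m(A) > 0 such that A is transitive, i.e. for every i ∈ S and every x ∈ A the orbit (U_{i,n}(x))_{n≥0} visits every state in S at least once. Then the deterministic walk is transitive on S: for all i, j ∈ S, m({x ∈ X : U_{i,n}(x) = j for some n ≥ 1}) = 1. -/
open MeasureTheory Set Filter

/-- If `T` is ergodic and measure preserving and there is a transitive set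
`A` of positive measure, then the deterministic walk is transitive on the finite state
space `S`. -/
theorem stmt_13 {X S : Type*} [MeasurableSpace X] [MeasurableSpace S]
    [MeasurableSingletonClass S] [Fintype S]
    (m : Measure X) [IsProbabilityMeasure m]
    (T : X → X) (hT : MeasurePreserving T m m) (hTerg : Ergodic T m)
    (f : S → X → S) (hf : ∀ i, Measurable (f i))
    (A : Set X) (hA : MeasurableSet A) (hApos : 0 < m A)
    (htrans : ∀ i : S, ∀ x ∈ A, ∀ j : S, ∃ n : ℕ, detWalk T f i n x = j) :
    WalkTransitive m T f := by
  classical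
  -- first coordinate of skew iterate
  have hfst : ∀ (n : ℕ) (p : X × S), ((detSkew T f)^[n] p).1 = T^[n] p.1 := by
    intro n
    induction n with
    | zero => intro p; simp
    | succ n ih =>
      intro p
      rw [Function.iterate_succ_apply, Function.iterate_succ_apply]
      exact ih _
  -- concatenation of walks
  have hconcat : ∀ (i : S) (n k : ℕ) (x : X),
      detWalk T f i (n + k) x = detWalk T f (detWalk T f i n x) k (T^[n] x) := by
    intro i n k x
    unfold detWalk
    rw [add_comm, Function.iterate_add_apply]
    have hp : (detSkew T f)^[n] (x, i) = (T^[n] x, detWalk T f i n x) :=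
      Prod.ext (hfst n (x, i)) rfl
    rw [hp]
  intro i j
  -- the set of points that hit A at a positive time
  set C : Set X := ⋃ n : ℕ, T^[n + 1] ⁻¹' A with hC
  have hTmeas := hT.measurable
  have hCmeas : MeasurableSet C :=
    MeasurableSet.iUnion fun n => (hTmeas.iterate (n + 1)) hA
  have hTC : T ⁻¹' C ⊆ C := by
    intro x hx
    simp only [hC, mem_iUnion, mem_preimage] at hx ⊢
    obtain ⟨n, hn⟩ := hx
    refine ⟨n + 1, ?_⟩
    rwa [Function.iterate_succ_apply]
  have hmeq : m (T ⁻¹' C) = m C := hT.measure_preimage hCmeas.nullMeasurableSet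
  have haeq : T ⁻¹' C =ᵐ[m] C :=
    ae_eq_of_subset_of_measure_ge hTC hmeq.ge
      ((hTmeas hCmeas).nullMeasurableSet) (measure_ne_top m _)
  have hCfull : m C = 1 := by
    rcases hTerg.quasiErgodic.ae_empty_or_univ₀ hCmeas.nullMeasurableSet haeq with h | h
    · exfalso
      have : m C = 0 := by simpa using measure_congr h
      have hsub : T ⁻¹' A ⊆ C := by
        intro x hx
        simp only [hC, mem_iUnion, mem_preimage]
        exact ⟨0, by simpa using hx⟩
      have : m (T ⁻¹' A) = 0 := le_antisymm (this ▸ measure_mono hsub) zero_le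
      rw [hT.measure_preimage hA.nullMeasurableSet] at this
      exact hApos.ne' this
    · calc m C = m univ := measure_congr h
        _ = 1 := measure_univ
  -- C is contained in the target set
  have hsub : C ⊆ {x | ∃ n, 1 ≤ n ∧ detWalk T f i n x = j} := by
    intro x hx
    simp only [hC, mem_iUnion, mem_preimage] at hx
    obtain ⟨n, hn⟩ := hx
    obtain ⟨k, hk⟩ := htrans (detWalk T f i (n + 1) x) (T^[n + 1] x) hn j
    refine ⟨n + 1 + k, le_add_of_le_of_nonneg (Nat.succ_le_succ (Nat.zero_le n)) (Nat.zero_le k), ?_⟩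
    rw [hconcat i (n + 1) k x]
    exact hk
  refine le_antisymm (prob_le_one) ?_
  calc (1 : ENNReal) = m C := hCfull.symm
    _ ≤ _ := measure_mono hsub
end
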